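/- Let A be a Boolean algebra, κ an infinite index set, and φ : A → M_κ a Boolean homomorphism such that the induced finitely additive measure μ = λ_κ ∘ φ on A is separable and atomless. Then there exists a Boolean subalgebra M' of M_κ which contains the image φ[A], is closed in the metric d_{λ_κ}, and is isomorphic as a Boolean algebra to the measure algebra M. -/

import Mathlib

open MeasureTheory Set Filter Topology
open scoped symmDiff ENNReal

noncomputable section

universe u v

/-- The two-element set `{0,1}`, as an additive group (addition mod 2) with the
discrete topology. -/
inductive Two : Type
  | zero
  | one
  deriving DecidableEq

instance : Fintype Two := ⟨{Two.zero, Two.one}, fun x => by cases x <;> simp⟩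

instance : Zero Two := ⟨Two.zero⟩
instance : One Two := ⟨Two.one⟩

/-- Addition modulo 2 on `{0,1}`. -/
def Two.add : Two → Two → Two
  | Two.zero, x => x
  | Two.one, Two.zero => Two.one
  | Two.one, Two.one => Two.zero

instance : Add Two := ⟨Two.add⟩
instance : Neg Two := ⟨fun x => x⟩

instance : AddCommGroup Two where
  add := (· + ·)
  zero := Two.zero
  neg := (- ·)
  add_assoc := by decide
  zero_add := by decide
  add_zero := by decide
  neg_add_cancel := by decide
  add_comm := by decide
  nsmul := nsmulRec
  zsmul := zsmulRec

instance : TopologicalSpace Two := ⊥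
instance : DiscreteTopology Two := ⟨rfl⟩

instance : IsTopologicalAddGroup Two where
  continuous_add := continuous_of_discreteTopology
  continuous_neg := continuous_of_discreteTopology

/-- The Cantor cube `{0,1}^κ`, with the product topology. -/
abbrev Cube (κ : Type u) : Type u := κ → Two

instance (κ : Type u) : MeasurableSpace (Cube κ) := borel _

instance (κ : Type u) : BorelSpace (Cube κ) := ⟨rfl⟩

/-- The fair-coin product measure `λ_κ` on `{0,1}^κ`: the Haar measure of the compact
group `{0,1}^κ`, normalized so that the whole space has measure `1`. -/
def lam (κ : Type u) : Measure (Cube κ) :=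
  Measure.addHaarMeasure ⟨⟨Set.univ, isCompact_univ⟩, by simpa using Set.univ_nonempty⟩

/-- The Boolean algebra of measurable subsets of `X`. -/
abbrev MSet (X : Type u) [MeasurableSpace X] : Type u := {s : Set X // MeasurableSet s}

/-- The ideal of `μ`-null sets in the Boolean ring of measurable subsets of `X`. -/
def nullIdeal {X : Type u} [MeasurableSpace X] (μ : Measure X) :
    Ideal (AsBoolRing (MSet X)) where
  carrier := {s | μ (ofBoolRing s : MSet X).1 = 0}
  zero_mem' := by
    show μ (ofBoolRing (0 : AsBoolRing (MSet X)) : MSet X).1 = 0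
    rw [ofBoolRing_zero]
    simpa using measure_empty (μ := μ)
  add_mem' := by
    intro a b ha hb
    show μ (ofBoolRing (a + b) : MSet X).1 = 0
    rw [ofBoolRing_add]
    refine le_antisymm ?_ (zero_le)
    calc μ ((ofBoolRing a ∆ ofBoolRing b : MSet X) : Set X)
        ≤ μ (((ofBoolRing a : MSet X) : Set X) ∪ ((ofBoolRing b : MSet X) : Set X)) := by
          refine measure_mono ?_
          simp only [symmDiff_def, MeasurableSet.sup_eq_union, MeasurableSet.coe_union,
            MeasurableSet.coe_sdiff]
          exact Set.union_subset_union Set.diff_subset Set.diff_subset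
      _ ≤ μ ((ofBoolRing a : MSet X) : Set X) + μ ((ofBoolRing b : MSet X) : Set X) :=
          measure_union_le _ _
      _ = 0 := by rw [ha, hb, add_zero]
  smul_mem' := by
    intro c x hx
    show μ (ofBoolRing (c * x) : MSet X).1 = 0
    rw [ofBoolRing_mul]
    refine le_antisymm ?_ (zero_le)
    calc μ ((ofBoolRing c ⊓ ofBoolRing x : MSet X) : Set X)
        ≤ μ ((ofBoolRing x : MSet X) : Set X) := by
          refine measure_mono ?_
          simp only [MeasurableSet.inf_eq_inter, MeasurableSet.coe_inter]
          exact Set.inter_subset_right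
      _ = 0 := hx

instance {X : Type u} [MeasurableSpace X] (μ : Measure X) :
    BooleanRing (AsBoolRing (MSet X) ⧸ nullIdeal μ) where
  isIdempotentElem a := by
    obtain ⟨x, rfl⟩ := Ideal.Quotient.mk_surjective a
    show _ * _ = _
    rw [← map_mul]
    exact congrArg _ (BooleanRing.mul_self x)

/-- The measure algebra of the measure `μ`: measurable sets modulo `μ`-null sets,
as a Boolean algebra.  For `μ = lam κ` this is the measure algebra `M_κ`. -/
abbrev MAlg (X : Type u) [MeasurableSpace X] (μ : Measure X) : Type u :=
  AsBoolAlg (AsBoolRing (MSet X) ⧸ nullIdeal μ)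

/-- The class of a measurable set in the measure algebra. -/
def MAlg.mk {X : Type u} [MeasurableSpace X] (μ : Measure X) (s : MSet X) : MAlg X μ :=
  toBoolAlg (Ideal.Quotient.mk (nullIdeal μ) (toBoolRing s))

/-- The measure induced by `μ` on its measure algebra `MAlg X μ` (with real values). -/
def mval {X : Type u} [MeasurableSpace X] (μ : Measure X) (a : MAlg X μ) : ℝ :=
  Quotient.liftOn' (ofBoolAlg a) (fun s => (μ (ofBoolRing s : MSet X).1).toReal)
    (by
      intro s t h
      have hst : s - t ∈ nullIdeal μ := by
        rwa [Submodule.quotientRel_def] at h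
      have h0 : μ (((ofBoolRing s : MSet X) : Set X) ∆ ((ofBoolRing t : MSet X) : Set X)) = 0 := by
        have hn : μ ((ofBoolRing (s - t) : MSet X) : Set X) = 0 := hst
        rw [ofBoolRing_sub] at hn
        simpa only [symmDiff_def, MeasurableSet.sup_eq_union, MeasurableSet.coe_union,
          MeasurableSet.coe_sdiff, Set.sup_eq_union] using hn
      have hc := measure_congr (μ := μ) (MeasureTheory.measure_symmDiff_eq_zero_iff.mp h0)
      simp only [hc])

/-- Separability of a finitely additive measure `μ` on a Boolean algebra: the
pseudometric space `(A, d_μ)`, `d_μ(a,b) = μ (a ∆ b)`, is separable. -/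
def FASeparable {A : Type v} [BooleanAlgebra A] (μ : A → ℝ) : Prop :=
  ∃ D : Set A, D.Countable ∧ ∀ a : A, ∀ ε : ℝ, 0 < ε → ∃ b ∈ D, μ (a ∆ b) < ε

/-- Atomlessness of a finitely additive measure `μ`: for every `ε > 0` there is a finite
partition of `⊤` into pieces each of `μ`-measure less than `ε`. -/
def FAAtomless {A : Type v} [BooleanAlgebra A] (μ : A → ℝ) : Prop :=
  ∀ ε : ℝ, 0 < ε → ∃ (N : ℕ) (f : Fin N → A),
    (∀ i, μ (f i) < ε) ∧ (∀ i j, i ≠ j → f i ⊓ f j = ⊥) ∧ Finset.univ.sup f = ⊤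
section Aux

instance : MeasurableSpace Two := ⊤
instance : BorelSpace Two := ⟨borel_eq_top_of_discrete.symm⟩
instance : MeasurableSingletonClass Two := ⟨fun _ => trivial⟩

instance (κ : Type u) : IsProbabilityMeasure (lam κ) :=
  ⟨MeasureTheory.Measure.addHaarMeasure_self⟩

instance (κ : Type u) : (lam κ).IsAddLeftInvariant := by
  unfold lam; infer_instance

instance (κ : Type u) : (lam κ).Regular := by
  unfold lam; infer_instance

lemma lam_univ (κ : Type u) : lam κ Set.univ = 1 := measure_univ

/-- A point cylinder. -/
def cyl {κ : Type u} (F : Finset κ) (v : κ → Two) : Set (Cube κ) := {x | ∀ i ∈ F, x i = v i}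

lemma isOpen_cyl {κ : Type u} (F : Finset κ) (v : κ → Two) : IsOpen (cyl F v) := by
  have : cyl F v = Set.pi (↑F) (fun i => {v i}) := by
    ext x; simp [cyl, Set.mem_pi]
  rw [this]
  exact isOpen_set_pi F.finite_toSet (fun a _ => isOpen_discrete _)

lemma measurableSet_cyl {κ : Type u} (F : Finset κ) (v : κ → Two) :
    MeasurableSet (cyl F v) := (isOpen_cyl F v).measurableSet

lemma lam_cyl {κ : Type u} (F : Finset κ) (v : κ → Two) :
    lam κ (cyl F v) = (2 ^ F.card : ℝ≥0∞)⁻¹ := by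
  classical
  have htwo : ∀ a b c : Two, b - a + c = b ↔ c = a := by decide
  -- all point cylinders over F have the same measure
  have key : ∀ v w : κ → Two, lam κ (cyl F v) = lam κ (cyl F w) := by
    intro v w
    have h : cyl F v = (fun x => (w - v) + x) ⁻¹' cyl F w := by
      ext x
      simp only [cyl, Set.mem_preimage, Set.mem_setOf_eq, Pi.add_apply, Pi.sub_apply]
      exact forall₂_congr fun i _ => (htwo (v i) (w i) (x i)).symm
    rw [h, measure_preimage_add]
  -- extension of a function on F
  set E : (F → Two) → (κ → Two) := fun u i => if h : i ∈ F then u ⟨i, h⟩ else 0 with hE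
  have hdisj : Pairwise (Function.onFun Disjoint fun u : F → Two => cyl F (E u)) := by
    intro u u' huu'
    simp only [Function.onFun, Set.disjoint_left]
    intro x hx hx'
    apply huu'
    funext i
    have h1 := hx i.1 i.2
    have h2 := hx' i.1 i.2
    rw [h1] at h2
    simp only [hE, i.2, dif_pos] at h2
    exact h2
  have hcover : (⋃ u : F → Two, cyl F (E u)) = Set.univ := by
    ext x
    simp only [Set.mem_iUnion, Set.mem_univ, iff_true]
    refine ⟨fun i => x i.1, fun i hi => ?_⟩
    simp [hE, hi]
  have hsum : ∑' _u : F → Two, lam κ (cyl F v) = 1 := by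
    calc ∑' u : F → Two, lam κ (cyl F v) = ∑' u : F → Two, lam κ (cyl F (E u)) :=
          tsum_congr fun u => key v (E u)
      _ = lam κ (⋃ u : F → Two, cyl F (E u)) :=
          (measure_iUnion hdisj fun u => measurableSet_cyl _ _).symm
      _ = 1 := by rw [hcover, lam_univ]
  have hcard : ∑' _u : F → Two, lam κ (cyl F v) = (2 ^ F.card : ℝ≥0∞) * lam κ (cyl F v) := by
    rw [tsum_fintype, Finset.sum_const, nsmul_eq_mul, Finset.card_univ, Fintype.card_fun,
      Fintype.card_coe]
    congr 1
    have : Fintype.card Two = 2 := rfl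
    rw [this]
    push_cast
    ring
  rw [hcard] at hsum
  have h2 : (2 ^ F.card : ℝ≥0∞) ≠ 0 := by positivity
  have h2' : (2 ^ F.card : ℝ≥0∞) ≠ ⊤ := ENNReal.pow_ne_top (by norm_num)
  calc lam κ (cyl F v) = (2 ^ F.card : ℝ≥0∞)⁻¹ * ((2 ^ F.card : ℝ≥0∞) * lam κ (cyl F v)) := by
        rw [← mul_assoc, ENNReal.inv_mul_cancel h2 h2', one_mul]
    _ = (2 ^ F.card : ℝ≥0∞)⁻¹ := by rw [hsum, mul_one]

end Aux
section Aux2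

/-- `s` is determined by coordinates in `F`. -/
def Det {κ : Type u} (F : Set κ) (s : Set (Cube κ)) : Prop :=
  ∀ x y : Cube κ, (∀ i ∈ F, x i = y i) → x ∈ s → y ∈ s

lemma exists_cyl_approx {κ : Type u} (s : Set (Cube κ)) (hs : MeasurableSet s)
    (ε : ℝ≥0∞) (hε : 0 < ε) :
    ∃ (F : Finset κ) (c : Set (Cube κ)), MeasurableSet c ∧ Det (↑F) c ∧
      lam κ (s ∆ c) < ε := by
  classical
  have hfin : lam κ s ≠ ⊤ := measure_ne_top _ _
  have hε2 : 0 < ε / 2 := ENNReal.half_pos hε.ne'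
  -- outer approximation by an open set
  obtain ⟨U, hsU, hUo, -, hU⟩ := hs.exists_isOpen_diff_lt (μ := lam κ) hfin hε2.ne'
  -- inner approximation by a compact set, via the complement
  obtain ⟨V, hscV, hVo, -, hV⟩ := hs.compl.exists_isOpen_diff_lt (μ := lam κ) (measure_ne_top _ _) hε2.ne'
  set K : Set (Cube κ) := Vᶜ with hK
  have hKs : K ⊆ s := fun x hx => by_contra fun hxs => hx (hscV hxs)
  have hKc : IsCompact K := hVo.isClosed_compl.isCompact
  have hsK : lam κ (s \ K) < ε / 2 := by
    have : s \ K = V \ sᶜ := by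
      rw [hK]
      ext x
      simp only [Set.mem_diff, Set.mem_compl_iff, not_not]
      tauto
    rwa [this]
  -- cover K by point cylinders inside U
  have hcylU : ∀ x ∈ K, ∃ I : Finset κ, cyl I x ⊆ U := by
    intro x hx
    obtain ⟨I, u, hu, hsub⟩ := isOpen_pi_iff.mp hUo x (hsU (hKs hx))
    refine ⟨I, fun y hy => hsub ?_⟩
    intro a ha
    rw [hy a (by exact_mod_cast ha)]
    exact (hu a (by exact_mod_cast ha)).2
  choose! I hI using hcylU
  have hcover : K ⊆ ⋃ x : K, cyl (I x.1) x.1 := fun x hx =>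
    Set.mem_iUnion.mpr ⟨⟨x, hx⟩, fun i _ => rfl⟩
  obtain ⟨t, ht⟩ := hKc.elim_finite_subcover (fun x : K => cyl (I x.1) x.1)
    (fun x => isOpen_cyl _ _) hcover
  set c : Set (Cube κ) := ⋃ x ∈ t, cyl (I x.1) x.1 with hc
  set F : Finset κ := t.sup (fun x => I x.1) with hF
  have hcm : MeasurableSet c :=
    t.finite_toSet.measurableSet_biUnion (fun x _ => measurableSet_cyl _ _)
  have hdet : Det (↑F) c := by
    intro x y hxy hx
    obtain ⟨z, hz, hxz⟩ := Set.mem_iUnion₂.mp hx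
    refine Set.mem_iUnion₂.mpr ⟨z, hz, ?_⟩
    intro i hi
    have hiF : i ∈ F := Finset.mem_coe.mp (Finset.le_sup (f := fun x : K => I x.1) hz hi)
    rw [← hxy i hiF]
    exact hxz i hi
  have hcU : c ⊆ U := by
    rw [hc]
    exact Set.iUnion₂_subset fun x _ => hI x.1 x.2
  have hKc' : K ⊆ c := ht
  refine ⟨F, c, hcm, hdet, ?_⟩
  have hsub : s ∆ c ⊆ (s \ K) ∪ (U \ s) := by
    rw [Set.symmDiff_def]
    apply Set.union_subset
    · exact Set.diff_subset_diff_right hKc' |>.trans (Set.subset_union_left)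
    · refine Set.Subset.trans ?_ Set.subset_union_right
      exact Set.diff_subset_diff_left hcU
  calc lam κ (s ∆ c) ≤ lam κ ((s \ K) ∪ (U \ s)) := measure_mono hsub
    _ ≤ lam κ (s \ K) + lam κ (U \ s) := measure_union_le _ _
    _ < ε / 2 + ε / 2 := ENNReal.add_lt_add hsK hU
    _ = ε := ENNReal.add_halves ε

end Aux2
section Aux3
set_option synthInstance.maxHeartbeats 1000000
set_option maxHeartbeats 1000000

variable {X : Type u} [MeasurableSpace X] {μ : Measure X}

lemma toBoolAlg_compl' {R : Type v} [BooleanRing R] (a : R) :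
    (toBoolAlg a)ᶜ = toBoolAlg (1 + a) :=
  ofBoolAlg_inj.mp (by rw [ofBoolAlg_compl, ofBoolAlg_toBoolAlg, ofBoolAlg_toBoolAlg])

lemma toBoolRing_compl' {B : Type v} [BooleanAlgebra B] (a : B) :
    toBoolRing (aᶜ) = 1 + toBoolRing a :=
  ofBoolRing_inj.mp (by
    rw [ofBoolRing_add, ofBoolRing_one, ofBoolRing_toBoolRing, ofBoolRing_toBoolRing,
      top_symmDiff']
    exact hnot_eq_compl.symm)

lemma MSet.coe_symmDiff (s t : MSet X) :
    ((s ∆ t : MSet X) : Set X) = (s : Set X) ∆ (t : Set X) := by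
  simp only [symmDiff_def, MeasurableSet.sup_eq_union, MeasurableSet.coe_union,
    MeasurableSet.coe_sdiff, Set.sup_eq_union]

lemma MAlg.mk_surjective : Function.Surjective (MAlg.mk μ) := by
  intro a
  obtain ⟨x, hx⟩ := Ideal.Quotient.mk_surjective (ofBoolAlg a)
  refine ⟨ofBoolRing x, ?_⟩
  rw [MAlg.mk, toBoolRing_ofBoolRing, hx, toBoolAlg_ofBoolAlg]

lemma mval_mk (s : MSet X) : mval μ (MAlg.mk μ s) = (μ s).toReal := by
  show Quotient.liftOn' (ofBoolAlg (toBoolAlg (Ideal.Quotient.mk _ (toBoolRing s)))) _ _ = _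
  rw [ofBoolAlg_toBoolAlg]
  rw [show Ideal.Quotient.mk (nullIdeal μ) (toBoolRing s) = Quotient.mk'' (toBoolRing s) from rfl,
    Quotient.liftOn'_mk'', ofBoolRing_toBoolRing]

lemma MAlg.mk_eq_mk {s t : MSet X} :
    MAlg.mk μ s = MAlg.mk μ t ↔ μ ((s : Set X) ∆ (t : Set X)) = 0 := by
  rw [MAlg.mk, MAlg.mk, toBoolAlg_inj, Ideal.Quotient.eq]
  show (μ (ofBoolRing (toBoolRing s - toBoolRing t) : MSet X).1 = 0) ↔ _
  rw [ofBoolRing_sub, ofBoolRing_toBoolRing, ofBoolRing_toBoolRing, MSet.coe_symmDiff]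

lemma MAlg.mk_symmDiff (s t : MSet X) :
    MAlg.mk μ s ∆ MAlg.mk μ t = MAlg.mk μ (s ∆ t) := by
  rw [MAlg.mk, MAlg.mk, MAlg.mk, ← toBoolAlg_add, ← map_add (Ideal.Quotient.mk (nullIdeal μ)), toBoolRing_symmDiff]

lemma MAlg.mk_inf (s t : MSet X) :
    MAlg.mk μ s ⊓ MAlg.mk μ t = MAlg.mk μ (s ⊓ t) := by
  rw [MAlg.mk, MAlg.mk, MAlg.mk, ← toBoolAlg_mul, ← map_mul (Ideal.Quotient.mk (nullIdeal μ)), toBoolRing_inf]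

lemma MAlg.mk_compl (s : MSet X) : (MAlg.mk μ s)ᶜ = MAlg.mk μ sᶜ := by
  rw [MAlg.mk, MAlg.mk, toBoolAlg_compl', toBoolRing_compl', map_add (Ideal.Quotient.mk (nullIdeal μ)), map_one (Ideal.Quotient.mk (nullIdeal μ))]

lemma MAlg.mk_sup (s t : MSet X) :
    MAlg.mk μ s ⊔ MAlg.mk μ t = MAlg.mk μ (s ⊔ t) := by
  have h1 : MAlg.mk μ s ⊔ MAlg.mk μ t = ((MAlg.mk μ s)ᶜ ⊓ (MAlg.mk μ t)ᶜ)ᶜ := by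
    rw [compl_inf, compl_compl, compl_compl]
  have h2 : (s : MSet X) ⊔ t = (sᶜ ⊓ tᶜ)ᶜ := by
    rw [compl_inf, compl_compl, compl_compl]
  rw [h1, h2, MAlg.mk_compl, MAlg.mk_compl, MAlg.mk_inf, MAlg.mk_compl]

lemma MAlg.mk_bot : MAlg.mk μ ⊥ = ⊥ := by
  rw [MAlg.mk, toBoolRing_bot, map_zero (Ideal.Quotient.mk (nullIdeal μ)), toBoolAlg_zero]

lemma MAlg.mk_top : MAlg.mk μ ⊤ = ⊤ := by
  rw [MAlg.mk, toBoolRing_top, map_one (Ideal.Quotient.mk (nullIdeal μ)), toBoolAlg_one]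

lemma mval_symmDiff_mk (s t : MSet X) :
    mval μ (MAlg.mk μ s ∆ MAlg.mk μ t) = (μ ((s : Set X) ∆ (t : Set X))).toReal := by
  rw [MAlg.mk_symmDiff, mval_mk, MSet.coe_symmDiff]

lemma mval_triangle [IsFiniteMeasure μ] (x y z : MAlg X μ) :
    mval μ (x ∆ z) ≤ mval μ (x ∆ y) + mval μ (y ∆ z) := by
  obtain ⟨s, rfl⟩ := MAlg.mk_surjective (μ := μ) x
  obtain ⟨t, rfl⟩ := MAlg.mk_surjective (μ := μ) y
  obtain ⟨u, rfl⟩ := MAlg.mk_surjective (μ := μ) z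
  rw [mval_symmDiff_mk, mval_symmDiff_mk, mval_symmDiff_mk]
  have hsub : (s : Set X) ∆ (u : Set X) ⊆ ((s : Set X) ∆ (t : Set X)) ∪ ((t : Set X) ∆ (u : Set X)) :=
    symmDiff_triangle _ _ _
  calc (μ ((s : Set X) ∆ (u : Set X))).toReal
      ≤ (μ (((s : Set X) ∆ (t : Set X)) ∪ ((t : Set X) ∆ (u : Set X)))).toReal := by
        apply ENNReal.toReal_mono (measure_ne_top _ _) (measure_mono hsub)
    _ ≤ ((μ ((s : Set X) ∆ (t : Set X))) + (μ ((t : Set X) ∆ (u : Set X)))).toReal := by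
        apply ENNReal.toReal_mono
        · exact ENNReal.add_ne_top.mpr ⟨measure_ne_top _ _, measure_ne_top _ _⟩
        · exact measure_union_le _ _
    _ = _ := ENNReal.toReal_add (measure_ne_top _ _) (measure_ne_top _ _)

end Aux3
section Aux4

/-- The point cylinders in the countable cube. -/
def CylN : Set (Set (Cube ℕ)) := {s | ∃ (F : Finset ℕ) (v : ℕ → Two), s = cyl F v}

lemma isPiSystem_cylN : IsPiSystem CylN := by
  classical
  rintro _ ⟨F, v, rfl⟩ _ ⟨G, w, rfl⟩ hne
  obtain ⟨x, hxF, hxG⟩ := hne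
  refine ⟨F ∪ G, fun i => if i ∈ F then v i else w i, ?_⟩
  ext y
  simp only [cyl, Set.mem_inter_iff, Set.mem_setOf_eq, Finset.mem_union]
  constructor
  · rintro ⟨h1, h2⟩ i hi
    by_cases hiF : i ∈ F
    · rw [if_pos hiF]; exact h1 i hiF
    · rw [if_neg hiF]; exact h2 i (hi.resolve_left hiF)
  · intro h
    constructor
    · intro i hi
      have := h i (Or.inl hi); rwa [if_pos hi] at this
    · intro i hi
      have := h i (Or.inr hi)
      by_cases hiF : i ∈ F
      · rw [if_pos hiF] at this
        rw [this, ← hxF i hiF, hxG i hi]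
      · rwa [if_neg hiF] at this

lemma borel_cube_nat_eq_pi :
    (borel (Cube ℕ) : MeasurableSpace (Cube ℕ)) = MeasurableSpace.pi :=
  (@Pi.borelSpace ℕ (fun _ => Two) _ _ _ _ _).measurable_eq.symm

lemma generateFrom_cylN :
    (borel (Cube ℕ) : MeasurableSpace (Cube ℕ)) = MeasurableSpace.generateFrom CylN := by
  apply le_antisymm
  · rw [borel_cube_nat_eq_pi]
    refine iSup_le fun n => ?_
    have hmeas : @Measurable (Cube ℕ) Two (MeasurableSpace.generateFrom CylN) ⊤
        (fun x => x n) := by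
      intro t _
      have ht : (fun x : Cube ℕ => x n) ⁻¹' t = ⋃ c ∈ t, cyl {n} (fun _ => c) := by
        ext x
        simp only [Set.mem_preimage, Set.mem_iUnion, cyl, Set.mem_setOf_eq,
          Finset.mem_singleton]
        constructor
        · intro hx; exact ⟨x n, hx, fun i hi => by rw [hi]⟩
        · rintro ⟨c, hc, hx⟩; rw [hx n rfl]; exact hc
      rw [ht]
      exact t.toFinite.measurableSet_biUnion fun c _ =>
        MeasurableSpace.measurableSet_generateFrom ⟨{n}, fun _ => c, rfl⟩
    exact measurable_iff_comap_le.mp hmeas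
  · refine MeasurableSpace.generateFrom_le ?_
    rintro _ ⟨F, v, rfl⟩
    exact measurableSet_cyl F v

lemma map_g_eq {κ : Type u} (j : ℕ → κ) (hj : Function.Injective j) :
    Measure.map (fun (x : Cube κ) n => x (j n)) (lam κ) = lam ℕ := by
  classical
  set g : Cube κ → Cube ℕ := fun x n => x (j n) with hgdef
  have hgc : Continuous g := continuous_pi fun n => continuous_apply _
  have hg : Measurable g := hgc.measurable
  haveI : IsFiniteMeasure (Measure.map g (lam κ)) := by
    constructor
    rw [Measure.map_apply hg MeasurableSet.univ, Set.preimage_univ, lam_univ]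
    exact ENNReal.one_lt_top
  refine MeasureTheory.ext_of_generate_finite CylN generateFrom_cylN isPiSystem_cylN ?_ ?_
  · rintro _ ⟨F, v, rfl⟩
    rw [Measure.map_apply hg (measurableSet_cyl F v)]
    have hpre : g ⁻¹' cyl F v = cyl (F.image j) (fun i => v (Function.invFun j i)) := by
      ext x
      simp only [cyl, Set.mem_preimage, Set.mem_setOf_eq, Finset.mem_image, hgdef]
      constructor
      · rintro h i ⟨n, hn, rfl⟩
        rw [Function.leftInverse_invFun hj n]
        exact h n hn
      · intro h n hn
        have := h (j n) ⟨n, hn, rfl⟩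
        rwa [Function.leftInverse_invFun hj n] at this
    rw [hpre, lam_cyl, lam_cyl, Finset.card_image_of_injective F hj]
  · rw [Measure.map_apply hg MeasurableSet.univ, Set.preimage_univ, lam_univ, lam_univ]

end Aux4
section Aux5

lemma ofReal_half_pow (n : ℕ) : ENNReal.ofReal ((1/2 : ℝ)^n) = (2⁻¹ : ℝ≥0∞)^n := by
  rw [ENNReal.ofReal_pow (by norm_num)]
  congr 1
  rw [one_div, ENNReal.ofReal_inv_of_pos (by norm_num : (0:ℝ) < 2)]
  norm_num

lemma null_of_approx {X : Type u} [MeasurableSpace X] (μ : Measure X) [IsFiniteMeasure μ]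
    (u : Set X) (s : ℕ → Set X)
    (hs : ∀ n, μ (u ∆ s n) ≤ (2⁻¹ : ℝ≥0∞)^n) :
    μ (u ∆ (⋂ N, ⋃ n, ⋃ (_ : N ≤ n), s n)) = 0 := by
  set t : Set X := ⋂ N, ⋃ n, ⋃ (_ : N ≤ n), s n with hts
  have hdiff1 : ∀ n, μ (s n \ u) ≤ (2⁻¹ : ℝ≥0∞)^n := fun n =>
    le_trans (measure_mono (by rw [Set.symmDiff_def]; exact Set.subset_union_right)) (hs n)
  have hdiff2 : ∀ n, μ (u \ s n) ≤ (2⁻¹ : ℝ≥0∞)^n := fun n =>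
    le_trans (measure_mono (by rw [Set.symmDiff_def]; exact Set.subset_union_left)) (hs n)
  have h1 : μ (t \ u) = 0 := by
    have hb : ∀ N : ℕ, μ (t \ u) ≤ (2⁻¹ : ℝ≥0∞)^N * 2 := by
      intro N
      have hsub : t \ u ⊆ ⋃ k : ℕ, (s (N + k) \ u) := by
        intro x hx
        have hx1 : x ∈ ⋃ n, ⋃ (_ : N ≤ n), s n := Set.mem_iInter.mp hx.1 N
        obtain ⟨n, hn, hxn⟩ : ∃ n, N ≤ n ∧ x ∈ s n := by
          simpa using hx1
        exact Set.mem_iUnion.mpr ⟨n - N, by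
          rw [Nat.add_sub_cancel' hn]; exact ⟨hxn, hx.2⟩⟩
      calc μ (t \ u) ≤ ∑' k : ℕ, μ (s (N + k) \ u) :=
            le_trans (measure_mono hsub) (measure_iUnion_le _)
        _ ≤ ∑' k : ℕ, (2⁻¹ : ℝ≥0∞)^(N + k) := ENNReal.tsum_le_tsum fun k => hdiff1 (N + k)
        _ = (2⁻¹ : ℝ≥0∞)^N * ∑' k : ℕ, (2⁻¹ : ℝ≥0∞)^k := by
            rw [← ENNReal.tsum_mul_left]
            exact tsum_congr fun k => pow_add _ _ _
        _ = (2⁻¹ : ℝ≥0∞)^N * 2 := by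
            rw [ENNReal.tsum_geometric, ENNReal.one_sub_inv_two, inv_inv]
    have htend : Tendsto (fun N : ℕ => (2⁻¹ : ℝ≥0∞)^N * 2) atTop (𝓝 0) := by
      have h0 := ENNReal.tendsto_pow_atTop_nhds_zero_of_lt_one
        (by norm_num : (2⁻¹ : ℝ≥0∞) < 1)
      have := ENNReal.Tendsto.mul_const h0 (Or.inr (by norm_num : (2:ℝ≥0∞) ≠ ⊤))
      simpa using this
    exact le_antisymm (ge_of_tendsto' htend hb) (zero_le)
  have h2 : μ (u \ t) = 0 := by
    have hUt : u \ t = ⋃ N : ℕ, (u \ ⋃ n, ⋃ (_ : N ≤ n), s n) := by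
      rw [hts, Set.diff_iInter]
    rw [hUt]
    refine measure_iUnion_null fun N => ?_
    have hEN : ∀ M, N ≤ M → μ (u \ ⋃ n, ⋃ (_ : N ≤ n), s n) ≤ (2⁻¹ : ℝ≥0∞)^M := by
      intro M hM
      refine le_trans (measure_mono ?_) (hdiff2 M)
      apply Set.diff_subset_diff_right
      exact Set.subset_iUnion₂ (s := fun n _ => s n) M hM
    refine le_antisymm ?_ (zero_le)
    refine ge_of_tendsto (ENNReal.tendsto_pow_atTop_nhds_zero_of_lt_one
      (by norm_num : (2⁻¹ : ℝ≥0∞) < 1)) ?_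
    filter_upwards [eventually_ge_atTop N] with M hM using hEN M hM
  refine le_antisymm ?_ (zero_le)
  calc μ (u ∆ t) ≤ μ (u \ t) + μ (t \ u) := by
        rw [Set.symmDiff_def]; exact measure_union_le _ _
    _ = 0 := by rw [h1, h2, add_zero]

lemma det_eq_preimage {κ : Type u} (j : ℕ → κ) (c : Set (Cube κ)) (F : Set κ)
    (hdet : Det F c) (hFT : ∀ i ∈ F, ∃ n, j n = i) :
    ∃ B : Set (Cube ℕ), (MeasurableSet c → MeasurableSet B) ∧
      (fun (x : Cube κ) n => x (j n)) ⁻¹' B = c := by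
  classical
  set E : Cube ℕ → Cube κ := fun z i => if h : ∃ n, j n = i then z (Nat.find h) else 0
    with hE
  have hEc : Continuous E := by
    apply continuous_pi
    intro i
    by_cases h : ∃ n, j n = i
    · simp only [hE, dif_pos h]
      exact continuous_apply _
    · simp only [hE, dif_neg h]
      exact continuous_const
  refine ⟨E ⁻¹' c, fun hc => hc.preimage hEc.measurable, ?_⟩
  ext x
  simp only [Set.mem_preimage]
  have key : ∀ i ∈ F, E (fun n => x (j n)) i = x i := by
    intro i hi
    have h : ∃ n, j n = i := hFT i hi
    simp only [hE, dif_pos h]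
    rw [Nat.find_spec h]
  exact ⟨fun h => hdet _ _ key h, fun h => hdet _ _ (fun i hi => (key i hi).symm) h⟩

end Aux5
set_option maxHeartbeats 1600000 in
set_option synthInstance.maxHeartbeats 1000000 in
/-- If `φ : A → M_κ` is a Boolean homomorphism whose induced measure `λ_κ ∘ φ` is
separable and atomless, then there is a Boolean subalgebra `M'` of `M_κ`, closed in the
metric `d_{λ_κ}`, containing `φ[A]`, and isomorphic (as a Boolean algebra) to `M`. -/
theorem separable_name_is_added_by_single_random_real
    {A : Type u} [BooleanAlgebra A] (κ : Type u) [Infinite κ]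
    (φ : BoundedLatticeHom A (MAlg (Cube κ) (lam κ)))
    (hsep : FASeparable (fun a : A => mval (lam κ) (φ a)))
    (hatomless : FAAtomless (fun a : A => mval (lam κ) (φ a))) :
    ∃ S : Set (MAlg (Cube κ) (lam κ)),
      (⊥ ∈ S) ∧ (⊤ ∈ S) ∧ (∀ x ∈ S, xᶜ ∈ S) ∧ (∀ x ∈ S, ∀ y ∈ S, x ⊔ y ∈ S) ∧
      (∀ a : A, φ a ∈ S) ∧
      (∀ x : MAlg (Cube κ) (lam κ),
        (∀ ε : ℝ, 0 < ε → ∃ y ∈ S, mval (lam κ) (x ∆ y) < ε) → x ∈ S) ∧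
      Nonempty (S ≃o MAlg (Cube ℕ) (lam ℕ)) := by
  classical
  obtain ⟨D, hDcount, hDdense⟩ := hsep
  -- representatives
  have hrep_mk : ∀ a : MAlg (Cube κ) (lam κ),
      MAlg.mk (lam κ) (Function.surjInv (MAlg.mk_surjective (μ := lam κ)) a) = a :=
    fun a => Function.surjInv_eq _ a
  set rep : MAlg (Cube κ) (lam κ) → MSet (Cube κ) :=
    Function.surjInv (MAlg.mk_surjective (μ := lam κ)) with hrepdef
  have hrepN_mk : ∀ b : MAlg (Cube ℕ) (lam ℕ),
      MAlg.mk (lam ℕ) (Function.surjInv (MAlg.mk_surjective (μ := lam ℕ)) b) = b :=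
    fun b => Function.surjInv_eq _ b
  set repN : MAlg (Cube ℕ) (lam ℕ) → MSet (Cube ℕ) :=
    Function.surjInv (MAlg.mk_surjective (μ := lam ℕ)) with hrepNdef
  -- cylinder approximations of representatives
  have happrox : ∀ (d : A) (n : ℕ), ∃ (F : Finset κ) (c : Set (Cube κ)),
      MeasurableSet c ∧ Det (↑F) c ∧
        lam κ ((rep (φ d) : Set (Cube κ)) ∆ c) < ENNReal.ofReal (1 / (n + 1 : ℝ)) :=
    fun d n => exists_cyl_approx _ (rep (φ d)).2 _
      (ENNReal.ofReal_pos.mpr (by positivity))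
  choose F c hc1 hc2 hc3 using happrox
  -- a countably infinite set of coordinates
  set T : Set κ := (⋃ d ∈ D, ⋃ n : ℕ, (↑(F d n) : Set κ)) ∪
    Set.range (Infinite.natEmbedding κ) with hTdef
  have hTc : T.Countable := by
    refine Set.Countable.union ?_ (Set.countable_range _)
    exact hDcount.biUnion fun d _ => Set.countable_iUnion fun n => (F d n).countable_toSet
  have hTi : T.Infinite :=
    Set.Infinite.mono Set.subset_union_right
      (Set.infinite_range_of_injective (Infinite.natEmbedding κ).injective)
  haveI := hTc.to_subtype
  haveI := hTi.to_subtype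
  obtain ⟨denu⟩ := nonempty_denumerable ↥T
  set j : ℕ → κ := fun n => ((Denumerable.eqv ↥T).symm n : κ) with hjdef
  have hj : Function.Injective j := by
    intro m n h
    have h2 : (Denumerable.eqv ↥T).symm m = (Denumerable.eqv ↥T).symm n :=
      Subtype.coe_injective h
    exact (Denumerable.eqv ↥T).symm.injective h2
  have hjT : ∀ i ∈ T, ∃ n, j n = i := fun i hi =>
    ⟨Denumerable.eqv ↥T ⟨i, hi⟩, by simp [hjdef]⟩
  set g : Cube κ → Cube ℕ := fun x n => x (j n) with hgdef
  have hg : Measurable g := (continuous_pi fun n => continuous_apply _).measurable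
  have hmapg : Measure.map g (lam κ) = lam ℕ := map_g_eq j hj
  have hgpre : ∀ B : Set (Cube ℕ), MeasurableSet B → lam κ (g ⁻¹' B) = lam ℕ B := by
    intro B hB
    rw [← hmapg, Measure.map_apply hg hB]
  -- the embedding of the countable measure algebra
  set pre : MSet (Cube ℕ) → MSet (Cube κ) :=
    fun B => ⟨g ⁻¹' (B : Set (Cube ℕ)), B.2.preimage hg⟩ with hpredef
  set Ψ : MAlg (Cube ℕ) (lam ℕ) → MAlg (Cube κ) (lam κ) :=
    fun b => MAlg.mk (lam κ) (pre (repN b)) with hΨdef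
  have hΨmk : ∀ B : MSet (Cube ℕ), Ψ (MAlg.mk (lam ℕ) B) = MAlg.mk (lam κ) (pre B) := by
    intro B
    apply MAlg.mk_eq_mk.mpr
    have h0 : lam ℕ ((repN (MAlg.mk (lam ℕ) B) : Set (Cube ℕ)) ∆ (B : Set (Cube ℕ))) = 0 :=
      MAlg.mk_eq_mk.mp (hrepN_mk _)
    have hps : ((pre (repN (MAlg.mk (lam ℕ) B)) : MSet (Cube κ)) : Set (Cube κ)) ∆
        ((pre B : MSet (Cube κ)) : Set (Cube κ))
        = g ⁻¹' ((repN (MAlg.mk (lam ℕ) B) : Set (Cube ℕ)) ∆ (B : Set (Cube ℕ))) :=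
      (Set.preimage_symmDiff _ _).symm
    rw [hps, hgpre _ ((repN _).2.symmDiff B.2), h0]
  have hpre_sup : ∀ P Q : MSet (Cube ℕ), pre (P ⊔ Q) = pre P ⊔ pre Q := by
    intro P Q
    apply Subtype.ext
    show g ⁻¹' ((P ⊔ Q : MSet (Cube ℕ)) : Set (Cube ℕ)) = _
    simp only [MeasurableSet.sup_eq_union, MeasurableSet.coe_union, Set.preimage_union]
    rfl
  have hpre_compl : ∀ P : MSet (Cube ℕ), pre Pᶜ = (pre P)ᶜ := by
    intro P
    apply Subtype.ext
    show g ⁻¹' ((Pᶜ : MSet (Cube ℕ)) : Set (Cube ℕ)) = _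
    simp only [MeasurableSet.coe_compl, Set.preimage_compl]
    rfl
  have hpre_bot : pre ⊥ = ⊥ := by
    apply Subtype.ext
    show g ⁻¹' ((⊥ : MSet (Cube ℕ)) : Set (Cube ℕ)) = _
    simp only [MeasurableSet.coe_bot, Set.bot_eq_empty, Set.preimage_empty]
  have hpre_top : pre ⊤ = ⊤ := by
    apply Subtype.ext
    show g ⁻¹' ((⊤ : MSet (Cube ℕ)) : Set (Cube ℕ)) = _
    simp only [MeasurableSet.coe_top, Set.top_eq_univ, Set.preimage_univ]
  have hΨbot : Ψ ⊥ = ⊥ := by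
    rw [← MAlg.mk_bot (μ := lam ℕ), hΨmk, hpre_bot, MAlg.mk_bot]
  have hΨtop : Ψ ⊤ = ⊤ := by
    rw [← MAlg.mk_top (μ := lam ℕ), hΨmk, hpre_top, MAlg.mk_top]
  have hΨsup : ∀ b b', Ψ (b ⊔ b') = Ψ b ⊔ Ψ b' := by
    intro b b'
    conv_lhs => rw [← hrepN_mk b, ← hrepN_mk b']
    conv_rhs => rw [← hrepN_mk b, ← hrepN_mk b']
    rw [MAlg.mk_sup, hΨmk, hΨmk, hΨmk, MAlg.mk_sup, hpre_sup]
  have hΨcompl : ∀ b, Ψ bᶜ = (Ψ b)ᶜ := by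
    intro b
    conv_lhs => rw [← hrepN_mk b]
    conv_rhs => rw [← hrepN_mk b]
    rw [MAlg.mk_compl, hΨmk, hΨmk, MAlg.mk_compl, hpre_compl]
  have hΨinj : Function.Injective Ψ := by
    intro b b' h
    rw [← hrepN_mk b, ← hrepN_mk b'] at h ⊢
    rw [hΨmk, hΨmk] at h
    have h0 := MAlg.mk_eq_mk.mp h
    rw [show ((pre (repN b) : MSet (Cube κ)) : Set (Cube κ)) ∆
        ((pre (repN b') : MSet (Cube κ)) : Set (Cube κ)) =
        g ⁻¹' (((repN b : MSet (Cube ℕ)) : Set (Cube ℕ)) ∆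
          ((repN b' : MSet (Cube ℕ)) : Set (Cube ℕ))) from (Set.preimage_symmDiff _ _).symm,
      hgpre _ ((repN b).2.symmDiff (repN b').2)] at h0
    exact MAlg.mk_eq_mk.mpr h0
  have hΨle : ∀ b b', Ψ b ≤ Ψ b' ↔ b ≤ b' := by
    intro b b'
    constructor
    · intro h
      have h1 : Ψ (b ⊔ b') = Ψ b' := by
        rw [hΨsup]
        exact sup_eq_right.mpr h
      exact sup_eq_right.mp (hΨinj h1)
    · intro h
      have h1 : Ψ b ⊔ Ψ b' = Ψ b' := by
        rw [← hΨsup, sup_eq_right.mpr h]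
      exact sup_eq_right.mp h1
  set S : Set (MAlg (Cube κ) (lam κ)) := Set.range Ψ with hSdef
  have hmem : ∀ B : MSet (Cube ℕ), MAlg.mk (lam κ) (pre B) ∈ S :=
    fun B => ⟨MAlg.mk (lam ℕ) B, hΨmk B⟩
  -- S is closed
  have hclosed : ∀ x : MAlg (Cube κ) (lam κ),
      (∀ ε : ℝ, 0 < ε → ∃ y ∈ S, mval (lam κ) (x ∆ y) < ε) → x ∈ S := by
    intro x hx
    have hseq : ∀ n : ℕ, ∃ B : MSet (Cube ℕ),
        lam κ ((rep x : Set (Cube κ)) ∆ (g ⁻¹' (B : Set (Cube ℕ)))) ≤ (2⁻¹ : ℝ≥0∞)^n := by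
      intro n
      obtain ⟨y, hyS, hy⟩ := hx ((1/2 : ℝ)^n) (by positivity)
      obtain ⟨b, rfl⟩ := hyS
      refine ⟨repN b, ?_⟩
      have hyb : Ψ b = MAlg.mk (lam κ) (pre (repN b)) := by
        conv_lhs => rw [← hrepN_mk b]
        exact hΨmk _
      rw [hyb, ← hrep_mk x, mval_symmDiff_mk] at hy
      have h2 := (ENNReal.lt_ofReal_iff_toReal_lt (measure_ne_top _ _)).mpr hy
      rw [ofReal_half_pow] at h2
      exact le_of_lt h2
    choose Bn hBn using hseq
    set T0 : Set (Cube ℕ) := ⋂ N, ⋃ n, ⋃ (_ : N ≤ n), (Bn n : Set (Cube ℕ)) with hT0def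
    have hT0 : MeasurableSet T0 :=
      MeasurableSet.iInter fun N => MeasurableSet.iUnion fun n =>
        MeasurableSet.iUnion fun _ => (Bn n).2
    have hnull : lam κ ((rep x : Set (Cube κ)) ∆ (g ⁻¹' T0)) = 0 := by
      have h := null_of_approx (lam κ) (rep x : Set (Cube κ))
        (fun n => g ⁻¹' (Bn n : Set (Cube ℕ))) hBn
      have hpreT0 : (⋂ N, ⋃ n, ⋃ (_ : N ≤ n), g ⁻¹' (Bn n : Set (Cube ℕ))) = g ⁻¹' T0 := by
        rw [hT0def]
        simp only [Set.preimage_iInter, Set.preimage_iUnion]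
      rwa [hpreT0] at h
    have hxS : x = MAlg.mk (lam κ) (pre ⟨T0, hT0⟩) := by
      conv_lhs => rw [← hrep_mk x]
      exact MAlg.mk_eq_mk.mpr hnull
    rw [hxS]
    exact hmem _
  -- S contains the image of φ
  have hφS : ∀ a : A, φ a ∈ S := by
    intro a
    apply hclosed
    intro ε hε
    obtain ⟨d, hdD, hd⟩ := hDdense a (ε/2) (half_pos hε)
    obtain ⟨q, hq⟩ := exists_nat_one_div_lt (half_pos hε)
    have hFT : ∀ i ∈ (↑(F d q) : Set κ), ∃ n, j n = i := by
      intro i hi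
      apply hjT
      rw [hTdef]
      exact Set.mem_union_left _ (Set.mem_biUnion hdD (Set.mem_iUnion.mpr ⟨q, hi⟩))
    obtain ⟨B, hBm, hBpre⟩ := det_eq_preimage j (c d q) _ (hc2 d q) hFT
    have hBmeas := hBm (hc1 d q)
    refine ⟨MAlg.mk (lam κ) ⟨c d q, hc1 d q⟩, ?_, ?_⟩
    · have heq : (⟨c d q, hc1 d q⟩ : MSet (Cube κ)) = pre ⟨B, hBmeas⟩ :=
        Subtype.ext hBpre.symm
      rw [heq]
      exact hmem _
    · have htri := mval_triangle (μ := lam κ) (φ a) (φ d)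
        (MAlg.mk (lam κ) ⟨c d q, hc1 d q⟩)
      have h1 : mval (lam κ) (φ a ∆ φ d) < ε/2 := by
        rw [← map_symmDiff' φ a d]
        exact hd
      have h2 : mval (lam κ) (φ d ∆ MAlg.mk (lam κ) ⟨c d q, hc1 d q⟩) < ε/2 := by
        conv_lhs => rw [← hrep_mk (φ d)]
        rw [mval_symmDiff_mk]
        have h' : (lam κ ((rep (φ d) : Set (Cube κ)) ∆ (c d q))).toReal < 1/(q+1 : ℝ) :=
          ENNReal.toReal_lt_of_lt_ofReal (hc3 d q)
        exact lt_trans h' hq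
      calc mval (lam κ) (φ a ∆ MAlg.mk (lam κ) ⟨c d q, hc1 d q⟩)
          ≤ mval (lam κ) (φ a ∆ φ d) +
            mval (lam κ) (φ d ∆ MAlg.mk (lam κ) ⟨c d q, hc1 d q⟩) := htri
        _ < ε/2 + ε/2 := add_lt_add h1 h2
        _ = ε := add_halves ε
  refine ⟨S, ⟨⊥, hΨbot⟩, ⟨⊤, hΨtop⟩, ?_, ?_, hφS, hclosed, ?_⟩
  · rintro x ⟨b, rfl⟩
    exact ⟨bᶜ, hΨcompl b⟩
  · rintro x ⟨b, rfl⟩ y ⟨b', rfl⟩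
    exact ⟨b ⊔ b', hΨsup b b'⟩
  · refine ⟨OrderIso.symm ?_⟩
    refine { toEquiv := Equiv.ofInjective Ψ hΨinj, map_rel_iff' := @fun b b' => ?_ }
    rw [← Subtype.coe_le_coe]
    exact hΨle b b'
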